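/- Let A ⊆ R^k be a convex set, λ > 0, M ≥ 0, and let H : R^p × R^k → R be such that for each q ∈ R^p the map α ↦ H(q, α) is differentiable on a neighborhood of A with gradient ∇_α H(q, ·) that is λ-strongly monotone on A (i.e. ⟨∇_α H(q,a) − ∇_α H(q,b), a − b⟩ ≥ λ‖a − b‖² for all a, b ∈ A), and such that ‖∇_α H(q, α) − ∇_α H(q', α)‖ ≤ M·‖q − q'‖ for all α ∈ A and q, q' ∈ R^p. If for each q the point α*(q) ∈ A minimizes H(q, ·) over A, then the map q ↦ α*(q) is Lipschitz continuous with constant M/λ: ‖α*(q) − α*(q')‖ ≤ (M/λ)·‖q − q'‖ for all q, q' ∈ R^p. -/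

import Mathlib

open InnerProductSpace

/-- First-order optimality: at a minimizer over a convex set, the gradient pairs
nonnegatively with directions into the set. -/
lemma grad_inner_nonneg_of_min {k : ℕ} {A : Set (EuclideanSpace ℝ (Fin k))}
    (hconv : Convex ℝ A) {f : EuclideanSpace ℝ (Fin k) → ℝ}
    {U : Set (EuclideanSpace ℝ (Fin k))} (hU : IsOpen U) (hAU : A ⊆ U)
    (hdiff : DifferentiableOn ℝ f U)
    {a : EuclideanSpace ℝ (Fin k)} (ha : a ∈ A)
    (hmin : ∀ α ∈ A, f a ≤ f α)
    {b : EuclideanSpace ℝ (Fin k)} (hb : b ∈ A) :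
    0 ≤ (inner ℝ (gradient f a) (b - a) : ℝ) := by
  have hda : DifferentiableAt ℝ f a :=
    (hdiff a (hAU ha)).differentiableAt (hU.mem_nhds (hAU ha))
  have hgrad : HasGradientAt f (gradient f a) a := hda.hasGradientAt
  have hfd : HasFDerivAt f (toDual ℝ _ (gradient f a)) a :=
    hasGradientAt_iff_hasFDerivAt.mp hgrad
  have hmem : b - a ∈ posTangentConeAt A a :=
    sub_mem_posTangentConeAt_of_segment_subset (hconv.segment_subset ha hb)
  have hlmin : IsLocalMinOn f A a :=
    (isMinOn_iff.mpr hmin).localize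
  have := hlmin.hasFDerivWithinAt_nonneg hfd.hasFDerivWithinAt hmem
  simpa [toDual_apply_apply] using this

theorem minimizer_lipschitz_in_parameter
    {p k : ℕ} (A : Set (EuclideanSpace ℝ (Fin k))) (hconv : Convex ℝ A)
    (lam M : ℝ) (hlam : 0 < lam) (hM : 0 ≤ M)
    (H : EuclideanSpace ℝ (Fin p) → EuclideanSpace ℝ (Fin k) → ℝ)
    (hdiff : ∀ q : EuclideanSpace ℝ (Fin p),
      ∃ U : Set (EuclideanSpace ℝ (Fin k)), IsOpen U ∧ A ⊆ U ∧ DifferentiableOn ℝ (H q) U)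
    (hmono : ∀ q : EuclideanSpace ℝ (Fin p), ∀ a ∈ A, ∀ b ∈ A,
      lam * ‖a - b‖ ^ 2 ≤ (inner ℝ (gradient (H q) a - gradient (H q) b) (a - b) : ℝ))
    (hlip : ∀ α ∈ A, ∀ q q' : EuclideanSpace ℝ (Fin p),
      ‖gradient (H q) α - gradient (H q') α‖ ≤ M * ‖q - q'‖)
    (αstar : EuclideanSpace ℝ (Fin p) → EuclideanSpace ℝ (Fin k))
    (hmin : ∀ q, αstar q ∈ A ∧ ∀ α ∈ A, H q (αstar q) ≤ H q α) :
    ∀ q q' : EuclideanSpace ℝ (Fin p),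
      ‖αstar q - αstar q'‖ ≤ (M / lam) * ‖q - q'‖ := by
  intro q q'
  set a := αstar q with ha_def
  set b := αstar q' with hb_def
  obtain ⟨ha, hamin⟩ := hmin q
  obtain ⟨hb, hbmin⟩ := hmin q'
  -- first order conditions
  obtain ⟨U, hU, hAU, hdU⟩ := hdiff q
  obtain ⟨U', hU', hAU', hdU'⟩ := hdiff q'
  have h1 : 0 ≤ (inner ℝ (gradient (H q) a) (b - a) : ℝ) :=
    grad_inner_nonneg_of_min hconv hU hAU hdU ha hamin hb
  have h2 : 0 ≤ (inner ℝ (gradient (H q') b) (a - b) : ℝ) :=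
    grad_inner_nonneg_of_min hconv hU' hAU' hdU' hb hbmin ha
  -- strong monotonicity
  have hsm := hmono q a ha b hb
  -- key chain
  have key : lam * ‖a - b‖ ^ 2 ≤ M * ‖q - q'‖ * ‖a - b‖ := by
    have e1 : (inner ℝ (gradient (H q) a - gradient (H q) b) (a - b) : ℝ)
        = inner ℝ (gradient (H q) a) (a - b) - inner ℝ (gradient (H q) b) (a - b) := by
      rw [inner_sub_left]
    have h1' : (inner ℝ (gradient (H q) a) (a - b) : ℝ) ≤ 0 := by
      have : (inner ℝ (gradient (H q) a) (b - a) : ℝ) = - inner ℝ (gradient (H q) a) (a - b) := by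
        rw [show b - a = -(a - b) by abel, inner_neg_right]
      linarith [h1, this ▸ h1]
    have step : lam * ‖a - b‖ ^ 2
        ≤ (inner ℝ (gradient (H q') b - gradient (H q) b) (a - b) : ℝ) := by
      have e2 : (inner ℝ (gradient (H q') b - gradient (H q) b) (a - b) : ℝ)
          = inner ℝ (gradient (H q') b) (a - b) - inner ℝ (gradient (H q) b) (a - b) := by
        rw [inner_sub_left]
      rw [e1] at hsm
      linarith
    calc lam * ‖a - b‖ ^ 2
        ≤ (inner ℝ (gradient (H q') b - gradient (H q) b) (a - b) : ℝ) := step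
      _ ≤ ‖gradient (H q') b - gradient (H q) b‖ * ‖a - b‖ := real_inner_le_norm _ _
      _ ≤ M * ‖q' - q‖ * ‖a - b‖ := by
          gcongr
          exact hlip b hb q' q
      _ = M * ‖q - q'‖ * ‖a - b‖ := by rw [norm_sub_rev]
  rcases eq_or_ne (‖a - b‖) 0 with h0 | h0
  · rw [h0]
    positivity
  · have hpos : 0 < ‖a - b‖ := lt_of_le_of_ne (norm_nonneg _) (Ne.symm h0)
    rw [div_mul_eq_mul_div, le_div_iff₀ hlam]
    nlinarith [key, sq_nonneg (‖a - b‖)]
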